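/- Discrete fixed points of BCD are stationary points of the relaxation: let s ∈ ∏_{i∈V} S_i be a labeling such that no single-node relabeling decreases the energy, i.e. for every node i ∈ V and every label t ∈ S_i, E(δ(s[i ↦ t])) ≥ E(δ(s)), where s[i ↦ t] is the labeling equal to s except that node i receives label t. Then δ(s) is a stationary point of the relaxed problem min_{x∈X} E(x): ⟨∇E(δ(s)), y − δ(s)⟩ ≥ 0 for all y ∈ X. -/

import Mathlib

/-- Discrete fixed points of BCD are stationary points of the relaxation: if no
single-node relabeling of `s` decreases the energy, then `δ(s)` satisfies the
first-order stationarity condition `⟨∇E(δ(s)), y − δ(s)⟩ ≥ 0` for all `y ∈ X`. -/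
theorem stmt6 (V : Type) [Fintype V] [DecidableEq V] [Nonempty V]
    (S : V → Type) [∀ i, Fintype (S i)] [∀ i, DecidableEq (S i)] [∀ i, Nonempty (S i)]
    (K : Type) [Fintype K] (C : K → Finset V)
    (f : (k : K) → ((i : C k) → S i.1) → ℝ)
    (E : ((i : V) → S i → ℝ) → ℝ)
    (hE : ∀ x, E x = ∑ k, ∑ s : (i : C k) → S i.1, f k s * ∏ i : C k, x i.1 (s i))
    (X : Set ((i : V) → S i → ℝ))
    (hX : X = {x | ∀ i, (∀ t, 0 ≤ x i t) ∧ (∑ t, x i t) = 1})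
    (δ : ((i : V) → S i) → ((i : V) → S i → ℝ))
    (hδ : ∀ s i t, δ s i t = if t = s i then (1 : ℝ) else 0)
    (s : (i : V) → S i)
    (hfix : ∀ (i : V) (t : S i), E (δ s) ≤ E (δ (Function.update s i t))) :
    ∀ y ∈ X, 0 ≤ fderiv ℝ E (δ s) (y - δ s) := by
  intro y hy
  rw [hX] at hy
  set P : (i : V) → S i → ℝ := δ s with hPdef
  have hP : ∀ i t, P i t = if t = s i then (1 : ℝ) else 0 := fun i t => hδ s i t
  -- evaluation continuous linear maps
  set ev : (i : V) → S i → (((j : V) → S j → ℝ) →L[ℝ] ℝ) :=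
    fun i t => (ContinuousLinearMap.proj (R := ℝ) (φ := fun _ : S i => ℝ) t).comp
      (ContinuousLinearMap.proj (R := ℝ) (φ := fun j : V => S j → ℝ) i) with hev
  set D : ((j : V) → S j → ℝ) →L[ℝ] ℝ :=
    ∑ k, ∑ s' : (i : C k) → S i.1, f k s' •
      ∑ i : C k, (∏ j ∈ Finset.univ.erase i, P j.1 (s' j)) • ev i.1 (s' i) with hD
  have hDer : HasFDerivAt E D P := by
    rw [show E = fun x => ∑ k, ∑ s' : (i : C k) → S i.1,
          f k s' * ∏ i : C k, x i.1 (s' i) from funext hE, hD]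
    apply HasFDerivAt.fun_sum; intro k _
    apply HasFDerivAt.fun_sum; intro s' _
    exact (HasFDerivAt.finset_prod (fun i _ => (ev i.1 (s' i)).hasFDerivAt)).const_mul (f k s')
  rw [hDer.fderiv]
  -- the energy of an indicator vector
  have hEδ : ∀ u : (i : V) → S i, E (δ u) = ∑ k, f k (fun j : C k => u j.1) := by
    intro u; rw [hE]
    apply Finset.sum_congr rfl; intro k _
    have key : ∀ s' : (j : C k) → S j.1,
        (∏ j : C k, δ u j.1 (s' j)) = if s' = (fun j : C k => u j.1) then (1 : ℝ) else 0 := by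
      intro s'
      rw [show (∏ j : C k, δ u j.1 (s' j)) = ∏ j : C k, if s' j = u j.1 then (1:ℝ) else 0 from
        Finset.prod_congr rfl (fun j _ => hδ u j.1 (s' j)), Finset.prod_boole]
      simp [funext_iff]
    simp only [key, mul_ite, mul_one, mul_zero, Finset.sum_ite_eq', Finset.mem_univ, if_true]
  -- abbreviations
  set h : (i : V) → S i → ℝ := fun i t => y i t - P i t with hh
  set F : (i : V) → S i → ℝ :=
    fun i t => ∑ k ∈ Finset.univ.filter (fun k => i ∈ C k),
      f k (fun j : C k => Function.update s i t j.1) with hF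
  -- the value of the derivative
  have hind : ∀ (k : K) (s' : (j : C k) → S j.1) (i : C k),
      (∏ j ∈ Finset.univ.erase i, P j.1 (s' j))
        = if ∀ j ∈ Finset.univ.erase i, s' j = s j.1 then (1:ℝ) else 0 := by
    intro k s' i
    rw [show (∏ j ∈ Finset.univ.erase i, P j.1 (s' j))
        = ∏ j ∈ Finset.univ.erase i, if s' j = s j.1 then (1:ℝ) else 0 from
      Finset.prod_congr rfl (fun j _ => hP j.1 (s' j))]
    rw [Finset.prod_boole]; congr
  have hcol : ∀ (k : K) (i : C k),
      (∑ s' : (j : C k) → S j.1, if ∀ j ∈ Finset.univ.erase i, s' j = s j.1 then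
          f k s' * (y i.1 (s' i) - P i.1 (s' i)) else 0)
        = ∑ t : S i.1, f k (fun j : C k => Function.update s i.1 t j.1) * (y i.1 t - P i.1 t) := by
    intro k i
    rw [← Finset.sum_filter]
    apply Finset.sum_nbij' (i := fun s' => s' i)
      (j := fun t => fun j : C k => Function.update s i.1 t j.1)
    · intro a _; exact Finset.mem_univ _
    · intro t _
      simp only [Finset.mem_filter, Finset.mem_univ, true_and]
      intro j hj
      have hji : j.1 ≠ i.1 := fun e => (Finset.mem_erase.1 hj).1 (Subtype.ext e)
      exact Function.update_of_ne hji t s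
    · intro s' hs'
      have hcond := (Finset.mem_filter.1 hs').2
      funext j
      by_cases hji : j = i
      · subst hji; exact Function.update_self _ _ _
      · have hne : j.1 ≠ i.1 := fun e => hji (Subtype.ext e)
        rw [Function.update_of_ne hne]
        exact (hcond j (Finset.mem_erase.2 ⟨hji, Finset.mem_univ _⟩)).symm
    · intro t _; exact Function.update_self _ _ _
    · intro s' hs'
      have hcond := (Finset.mem_filter.1 hs').2
      have hs'eq : (fun j : C k => Function.update s i.1 (s' i) j.1) = s' := by
        funext j
        by_cases hji : j = i
        · subst hji; exact Function.update_self _ _ _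
        · have hne : j.1 ≠ i.1 := fun e => hji (Subtype.ext e)
          rw [Function.update_of_ne hne]
          exact (hcond j (Finset.mem_erase.2 ⟨hji, Finset.mem_univ _⟩)).symm
      rw [hs'eq]
  have hswap : ∀ (g : (k : K) → V → ℝ),
      ∑ k, ∑ i ∈ C k, g k i
        = ∑ i : V, ∑ k ∈ Finset.univ.filter (fun k => i ∈ C k), g k i := by
    intro g
    calc ∑ k, ∑ i ∈ C k, g k i = ∑ k, ∑ i : V, if i ∈ C k then g k i else 0 := by
          apply Finset.sum_congr rfl; intro k _
          rw [← Finset.sum_filter, Finset.filter_univ_mem]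
      _ = ∑ i : V, ∑ k, if i ∈ C k then g k i else 0 := Finset.sum_comm
      _ = _ := Finset.sum_congr rfl (fun i _ => (Finset.sum_filter _ _).symm)
  have hval : D (y - P) = ∑ i : V, ∑ t : S i, F i t * h i t := by
    simp only [hF, hh]
    calc D (y - P)
        = ∑ k, ∑ s' : (j : C k) → S j.1, f k s' *
            ∑ i : C k, (∏ j ∈ Finset.univ.erase i, P j.1 (s' j)) *
              (y i.1 (s' i) - P i.1 (s' i)) := by
          rw [hD]
          simp only [ContinuousLinearMap.sum_apply, ContinuousLinearMap.smul_apply,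
            smul_eq_mul, hev, ContinuousLinearMap.coe_comp', Function.comp_apply,
            ContinuousLinearMap.proj_apply, Pi.sub_apply]
      _ = ∑ k, ∑ i : C k, ∑ s' : (j : C k) → S j.1,
            (if ∀ j ∈ Finset.univ.erase i, s' j = s j.1 then
              f k s' * (y i.1 (s' i) - P i.1 (s' i)) else 0) := by
          apply Finset.sum_congr rfl; intro k _
          simp only [Finset.mul_sum]
          rw [Finset.sum_comm]
          apply Finset.sum_congr rfl; intro i _
          apply Finset.sum_congr rfl; intro s' _
          rw [hind k s' i]
          simp only [mul_ite, mul_one, mul_zero, ite_mul, zero_mul, one_mul]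
      _ = ∑ k, ∑ i : C k, ∑ t : S i.1,
            f k (fun j : C k => Function.update s i.1 t j.1) * (y i.1 t - P i.1 t) :=
          Finset.sum_congr rfl (fun k _ => Finset.sum_congr rfl (fun i _ => hcol k i))
      _ = ∑ k, ∑ i ∈ C k, ∑ t : S i,
            f k (fun j : C k => Function.update s i t j.1) * (y i t - P i t) := by
          apply Finset.sum_congr rfl; intro k _
          exact Finset.sum_coe_sort (C k)
            (fun i => ∑ t : S i, f k (fun j : C k => Function.update s i t j.1) * (y i t - P i t))
      _ = ∑ i : V, ∑ k ∈ Finset.univ.filter (fun k => i ∈ C k), ∑ t : S i,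
            f k (fun j : C k => Function.update s i t j.1) * (y i t - P i t) :=
          hswap _
      _ = ∑ i : V, ∑ t : S i,
            (∑ k ∈ Finset.univ.filter (fun k => i ∈ C k),
              f k (fun j : C k => Function.update s i t j.1)) * (y i t - P i t) := by
          apply Finset.sum_congr rfl; intro i _
          rw [Finset.sum_comm]
          exact Finset.sum_congr rfl (fun t _ => (Finset.sum_mul _ _ _).symm)
  rw [hval]
  -- per-node nonnegativity
  apply Finset.sum_nonneg
  intro i _
  set c : ℝ := ∑ k ∈ Finset.univ.filter (fun k => i ∉ C k), f k (fun j : C k => s j.1) with hc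
  have hFE : ∀ t, F i t + c = E (δ (Function.update s i t)) := by
    intro t
    rw [hEδ, ← Finset.sum_filter_add_sum_filter_not Finset.univ (fun k => i ∈ C k)
      (fun k => f k (fun j : C k => Function.update s i t j.1)), hF, hc]
    congr 1
    apply Finset.sum_congr rfl
    intro k hk
    have hik : i ∉ C k := (Finset.mem_filter.1 hk).2
    congr 1
    funext j
    exact (Function.update_of_ne (fun e => hik (by rw [← e]; exact j.2)) t s).symm
  have hsumP : ∑ t, P i t = 1 := by simp [hP]
  have h0 : ∑ t, h i t = 0 := by
    rw [hh]; simp only []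
    rw [Finset.sum_sub_distrib, (hy i).2, hsumP, sub_self]
  have hstep : ∑ t, F i t * h i t =
      ∑ t, E (δ (Function.update s i t)) * h i t - c * ∑ t, h i t := by
    rw [Finset.mul_sum, ← Finset.sum_sub_distrib]
    apply Finset.sum_congr rfl; intro t _
    rw [← hFE t]; ring
  rw [hstep, h0, mul_zero, sub_zero]
  have h2 : ∑ t, E (δ (Function.update s i t)) * P i t = E (δ s) := by
    simp [hP, mul_ite, mul_one, mul_zero, Finset.sum_ite_eq', Function.update_eq_self]
  have hy1 : ∑ t, y i t = 1 := (hy i).2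
  calc (0:ℝ) = E (δ s) * ∑ t, y i t - E (δ s) := by rw [hy1]; ring
    _ ≤ (∑ t, E (δ (Function.update s i t)) * y i t) - E (δ s) := by
        apply sub_le_sub_right
        rw [Finset.mul_sum]
        exact Finset.sum_le_sum fun t _ => mul_le_mul_of_nonneg_right (hfix i t) ((hy i).1 t)
    _ = ∑ t, E (δ (Function.update s i t)) * h i t := by
        rw [← h2, ← Finset.sum_sub_distrib]
        apply Finset.sum_congr rfl; intro t _
        rw [hh]; ring
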